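/- Let K be a closed convex subset of ℝⁿ and h : ℝⁿ → ℝ be differentiable strongly quasiconvex with modulus γ > 0, with unique minimizer x̄ ∈ K. If limsup_{x∈K, ‖x‖→∞} h(x)/‖x‖² < +∞ and limsup_{x∈K, x→x̄} (h(x) - h(x̄))/‖x - x̄‖² < +∞, then there exists κ ∈ (0,1] such that κ(h(y) - h(x̄)) ≤ ⟨∇h(y), y - x̄⟩ for all y ∈ K (h is quasar-convex on K). -/

import Mathlib

set_option maxHeartbeats 1000000

open Filter Topology

theorem quasar_convexity_under_growth_conditions
    {n : ℕ} (K : Set (EuclideanSpace ℝ (Fin n))) (hKc : IsClosed K) (hKconv : Convex ℝ K)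
    (h : EuclideanSpace ℝ (Fin n) → ℝ)
    (g : EuclideanSpace ℝ (Fin n) → EuclideanSpace ℝ (Fin n))
    (hgrad : ∀ x, HasGradientAt h (g x) x)
    (γ : ℝ) (hγ : 0 < γ)
    (hsq : ∀ x y : EuclideanSpace ℝ (Fin n), ∀ lam : ℝ, lam ∈ Set.Icc (0:ℝ) 1 →
      h (lam • y + (1 - lam) • x) ≤
        max (h y) (h x) - lam * (1 - lam) * (γ / 2) * ‖x - y‖ ^ 2)
    (xbar : EuclideanSpace ℝ (Fin n)) (hxbar : xbar ∈ K)
    (hmin : ∀ x, h xbar ≤ h x)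
    (hgrowth_infty : ∃ C R : ℝ, ∀ x ∈ K, R ≤ ‖x‖ → h x / ‖x‖ ^ 2 ≤ C)
    (hgrowth_local : ∃ C : ℝ, ∃ δ : ℝ, 0 < δ ∧ ∀ x ∈ K, x ≠ xbar → ‖x - xbar‖ ≤ δ →
      (h x - h xbar) / ‖x - xbar‖ ^ 2 ≤ C) :
    ∃ κ : ℝ, 0 < κ ∧ κ ≤ 1 ∧
      ∀ y ∈ K, κ * (h y - h xbar) ≤ (inner ℝ (g y) (y - xbar) : ℝ) := by
  obtain ⟨C, R, hCR⟩ := hgrowth_infty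
  obtain ⟨Cl, δ, hδ, hloc⟩ := hgrowth_local
  have hcont : Continuous h := by
    rw [continuous_iff_continuousAt]
    exact fun x => (hgrad x).hasFDerivAt.differentiableAt.continuousAt
  -- Step 1: gradient inequality from strong quasiconvexity
  have key : ∀ y, (γ / 2) * ‖y - xbar‖ ^ 2 ≤ (inner ℝ (g y) (y - xbar) : ℝ) := by
    intro y
    have hc : ∀ t : ℝ, y + t • (xbar - y) = t • xbar + (1 - t) • y := by
      intro t; module
    have hderiv : HasDerivAt (fun t : ℝ => h (y + t • (xbar - y)))
        ((inner ℝ (g y) (xbar - y) : ℝ)) 0 := by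
      have hline : HasDerivAt (fun t : ℝ => y + t • (xbar - y)) (xbar - y) 0 := by
        simpa using ((hasDerivAt_id (0:ℝ)).smul_const (xbar - y)).const_add y
      have h0 : y + (0:ℝ) • (xbar - y) = y := by simp
      have hF := (hgrad y).hasFDerivAt
      rw [← h0] at hF
      have := hF.comp_hasDerivAt (0:ℝ) hline
      simp at this; exact this
    have hslope : Tendsto (fun t : ℝ => (h (y + t • (xbar - y)) - h y) / t) (𝓝[>] 0)
        (𝓝 (inner ℝ (g y) (xbar - y) : ℝ)) := by
      have := (hasDerivAt_iff_tendsto_slope.mp hderiv).mono_left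
        (nhdsWithin_mono _ (by intro t ht; exact ne_of_gt ht))
      refine this.congr fun t => ?_
      simp [slope_def_field]
    have hrhs : Tendsto (fun t : ℝ => -((1 - t) * (γ / 2) * ‖y - xbar‖ ^ 2)) (𝓝[>] 0)
        (𝓝 (-((γ / 2) * ‖y - xbar‖ ^ 2))) := by
      have hcont2 : Continuous (fun t : ℝ => -((1 - t) * (γ / 2) * ‖y - xbar‖ ^ 2)) := by
        continuity
      simpa using (hcont2.tendsto 0).mono_left (nhdsWithin_le_nhds (s := Set.Ioi (0:ℝ)))
    have hbound : ∀ᶠ t in 𝓝[>] (0:ℝ),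
        (h (y + t • (xbar - y)) - h y) / t ≤ -((1 - t) * (γ / 2) * ‖y - xbar‖ ^ 2) := by
      filter_upwards [Ioo_mem_nhdsGT_of_mem (Set.left_mem_Ico.mpr one_pos)] with t ht
      have hsq' := hsq y xbar t ⟨le_of_lt ht.1, le_of_lt ht.2⟩
      rw [← hc t] at hsq'
      rw [max_eq_right (hmin y)] at hsq'
      rw [div_le_iff₀ ht.1]
      have hring : -((1 - t) * (γ / 2) * ‖y - xbar‖ ^ 2) * t
          = -(t * (1 - t) * (γ / 2) * ‖y - xbar‖ ^ 2) := by ring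
      linarith [hsq', hring.ge, hring.le]
    have hfin : (inner ℝ (g y) (xbar - y) : ℝ) ≤ -((γ / 2) * ‖y - xbar‖ ^ 2) :=
      le_of_tendsto_of_tendsto hslope hrhs hbound
    have : (inner ℝ (g y) (y - xbar) : ℝ) = -(inner ℝ (g y) (xbar - y) : ℝ) := by
      rw [← inner_neg_right]; congr 1; abel
    rw [this]; linarith
  -- Step 2: global quadratic growth  h y - h xbar ≤ C' * ‖y - xbar‖²
  set R₁ : ℝ := max R (2 * ‖xbar‖ + 2) with hR₁
  have hR₁ge : (2:ℝ) * ‖xbar‖ + 2 ≤ R₁ := le_max_right _ _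
  -- compact middle region
  have hScomp : IsCompact (K ∩ Metric.closedBall 0 R₁) :=
    (isCompact_closedBall 0 R₁).inter_left hKc
  have hSne : (K ∩ Metric.closedBall 0 R₁).Nonempty := by
    refine ⟨xbar, hxbar, ?_⟩
    rw [Metric.mem_closedBall, dist_zero_right]
    nlinarith [norm_nonneg xbar]
  obtain ⟨z, hz, hzmax⟩ := hScomp.exists_isMaxOn hSne hcont.continuousOn
  set M : ℝ := h z with hM
  set Cmid : ℝ := max 0 (M - h xbar) / δ ^ 2 with hCmid
  set Cinf : ℝ := 4 * |C| + |h xbar| with hCinf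
  set C' : ℝ := max 1 (max Cl (max Cinf Cmid)) with hC'
  have hC'pos : (0:ℝ) < C' := lt_of_lt_of_le one_pos (le_max_left _ _)
  have hquad : ∀ y ∈ K, h y - h xbar ≤ C' * ‖y - xbar‖ ^ 2 := by
    intro y hy
    by_cases hyx : y = xbar
    · simp [hyx]
    have hnpos : 0 < ‖y - xbar‖ := by
      rw [norm_pos_iff, sub_ne_zero]; exact hyx
    by_cases hsmall : ‖y - xbar‖ ≤ δ
    · have := hloc y hy hyx hsmall
      have h1 : h y - h xbar ≤ Cl * ‖y - xbar‖ ^ 2 := by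
        rw [div_le_iff₀ (by positivity)] at this; linarith
      have h2 : Cl ≤ C' := le_trans (le_max_left _ _) (le_max_right _ _)
      nlinarith [sq_nonneg ‖y - xbar‖]
    push_neg at hsmall
    by_cases hbig : R₁ ≤ ‖y‖
    · -- far region
      have hCy : h y / ‖y‖ ^ 2 ≤ C := hCR y hy (le_trans (le_max_left _ _) hbig)
      have hy2 : (0:ℝ) < ‖y‖ := by nlinarith [norm_nonneg xbar]
      have hhy : h y ≤ C * ‖y‖ ^ 2 := by
        rw [div_le_iff₀ (by positivity)] at hCy; linarith
      have htri : ‖y‖ - ‖xbar‖ ≤ ‖y - xbar‖ := norm_sub_norm_le _ _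
      have hxb : 2 * ‖xbar‖ + 2 ≤ ‖y‖ := le_trans hR₁ge hbig
      have hd1 : 1 ≤ ‖y - xbar‖ := by nlinarith
      have hd2 : ‖y‖ ≤ 2 * ‖y - xbar‖ := by nlinarith
      have h3 : Cinf ≤ C' := le_trans (le_trans (le_max_left _ _) (le_max_right _ _))
        (le_max_right _ _)
      have habs : C ≤ |C| := le_abs_self C
      have habs2 : -|h xbar| ≤ h xbar := neg_abs_le _
      have hstep : h y - h xbar ≤ Cinf * ‖y - xbar‖ ^ 2 := by
        have : h y - h xbar ≤ |C| * ‖y‖ ^ 2 + |h xbar| := by nlinarith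
        have hsq2 : ‖y‖ ^ 2 ≤ 4 * ‖y - xbar‖ ^ 2 := by nlinarith [norm_nonneg y]
        have hsq1 : 1 ≤ ‖y - xbar‖ ^ 2 := by nlinarith
        have h4 : |C| * ‖y‖ ^ 2 ≤ 4 * |C| * ‖y - xbar‖ ^ 2 := by
          nlinarith [mul_le_mul_of_nonneg_left hsq2 (abs_nonneg C)]
        have h5 : |h xbar| ≤ |h xbar| * ‖y - xbar‖ ^ 2 := by
          nlinarith [mul_le_mul_of_nonneg_left hsq1 (abs_nonneg (h xbar))]
        rw [hCinf]; nlinarith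
      nlinarith [sq_nonneg ‖y - xbar‖]
    push_neg at hbig
    · -- middle region
      have hyS : y ∈ K ∩ Metric.closedBall 0 R₁ := by
        refine ⟨hy, ?_⟩
        rw [Metric.mem_closedBall, dist_zero_right]; exact le_of_lt hbig
      have hyM : h y ≤ M := hzmax hyS
      have h6 : h y - h xbar ≤ max 0 (M - h xbar) := le_trans (by linarith)
        (le_max_right _ _)
      have h7 : max 0 (M - h xbar) = Cmid * δ ^ 2 := by
        rw [hCmid, div_mul_cancel₀]; positivity
      have hCmidnn : 0 ≤ Cmid := by rw [hCmid]; positivity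
      have h8 : Cmid * δ ^ 2 ≤ Cmid * ‖y - xbar‖ ^ 2 :=
        mul_le_mul_of_nonneg_left (by nlinarith) hCmidnn
      have h9 : Cmid ≤ C' := le_trans (le_trans (le_max_right _ _) (le_max_right _ _))
        (le_max_right _ _)
      nlinarith [sq_nonneg ‖y - xbar‖]
  -- Conclusion
  refine ⟨min 1 (γ / (2 * C')), ?_, min_le_left _ _, ?_⟩
  · exact lt_min one_pos (by positivity)
  intro y hy
  have h0 : 0 ≤ h y - h xbar := by linarith [hmin y]
  have hκ : min 1 (γ / (2 * C')) ≤ γ / (2 * C') := min_le_right _ _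
  have hκpos : 0 < min 1 (γ / (2 * C')) := lt_min one_pos (by positivity)
  have step1 : min 1 (γ / (2 * C')) * (h y - h xbar) ≤ γ / (2 * C') * (h y - h xbar) := by
    nlinarith
  have step2 : γ / (2 * C') * (h y - h xbar) ≤ γ / (2 * C') * (C' * ‖y - xbar‖ ^ 2) := by
    have := hquad y hy
    have hpos : 0 < γ / (2 * C') := by positivity
    nlinarith
  have step3 : γ / (2 * C') * (C' * ‖y - xbar‖ ^ 2) = (γ / 2) * ‖y - xbar‖ ^ 2 := by
    field_simp
  calc min 1 (γ / (2 * C')) * (h y - h xbar) ≤ γ / (2 * C') * (h y - h xbar) := step1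
    _ ≤ γ / (2 * C') * (C' * ‖y - xbar‖ ^ 2) := step2
    _ = (γ / 2) * ‖y - xbar‖ ^ 2 := step3
    _ ≤ _ := key y
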